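/- arXiv:1503.06929 — 5 statements merged into one kernel-verified Lean document; each statement's English description precedes it below -/
import Mathlib

section
/- Let G₁, G₂ be connected bipartite graphs with bipartitions (A₁, B₁) and (A₂, B₂), each part of size at least 3, and let H₁, H₂ be the corresponding graphs obtained by replacing each edge e = ab with a new vertex c_e adjacent to a and b, and adding all edges between the two parts. Then any isomorphism φ : H₁ → H₂ maps C₁ onto C₂ and A₁ ∪ B₁ onto A₂ ∪ B₂. -/
/-- The graph `H` built from a bipartite graph `G` with bipartition `(A, B)`:
vertices are `A ∪ B` (the original vertices) together with one new vertex `c_e`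
per edge `e`; all edges between `A` and `B` are present, and each `c_e` is
adjacent exactly to the two endpoints of `e`. -/
def Hgraph {V : Type*} (G : SimpleGraph V) (A B : Set V) :
    SimpleGraph (V ⊕ G.edgeSet) where
  Adj x y :=
    match x, y with
    | Sum.inl u, Sum.inl v => u ≠ v ∧ ((u ∈ A ∧ v ∈ B) ∨ (u ∈ B ∧ v ∈ A))
    | Sum.inl u, Sum.inr e => u ∈ (e : Sym2 V)
    | Sum.inr e, Sum.inl u => u ∈ (e : Sym2 V)
    | Sum.inr _, Sum.inr _ => False
  symm := by
    constructor
    rintro (u | e) (v | f) h <;> simp_all <;> tauto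
  loopless := by
    constructor
    rintro (u | e) h <;> simp_all

/-- The order relation of the poset `P_H` on `A ∪ B ∪ C`:
`a ⪯ b` for `a ∈ A`, `b ∈ B`; `a ⪯ c_e` iff `a ∈ A` is an endpoint of `e`;
`c_e ⪯ b` iff `b ∈ B` is an endpoint of `e`; plus reflexivity. -/
def PHle {V : Type*} (G : SimpleGraph V) (A B : Set V) :
    (V ⊕ G.edgeSet) → (V ⊕ G.edgeSet) → Prop
  | Sum.inl u, Sum.inl v => u = v ∨ (u ∈ A ∧ v ∈ B)
  | Sum.inl u, Sum.inr e => u ∈ A ∧ u ∈ (e : Sym2 V)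
  | Sum.inr e, Sum.inl v => v ∈ B ∧ v ∈ (e : Sym2 V)
  | Sum.inr e, Sum.inr f => e = f


lemma ncard_nbr_inr {V : Type*} [Finite V] (G : SimpleGraph V) (A B : Set V)
    (e : G.edgeSet) :
    ((Hgraph G A B).neighborSet (Sum.inr e)).ncard = 2 := by
  obtain ⟨⟨a, b⟩, hab⟩ := Quot.exists_rep (e : Sym2 V)
  have hab' : (e : Sym2 V) = s(a, b) := hab.symm
  have hadj : G.Adj a b := by
    have := e.2
    rw [hab', SimpleGraph.mem_edgeSet] at this
    exact this
  have hset : (Hgraph G A B).neighborSet (Sum.inr e) =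
      {Sum.inl a, Sum.inl b} := by
    ext x
    cases x with
    | inl u =>
        simp only [SimpleGraph.mem_neighborSet, Set.mem_insert_iff, Set.mem_singleton_iff]
        constructor
        · intro h
          have : u ∈ (e : Sym2 V) := h
          rw [hab', Sym2.mem_iff] at this
          rcases this with h | h <;> simp [h]
        · rintro (h | h) <;>
          · injection h with h
            show u ∈ (e : Sym2 V)
            rw [hab', Sym2.mem_iff]
            tauto
    | inr f =>
        simp only [SimpleGraph.mem_neighborSet, Set.mem_insert_iff, Set.mem_singleton_iff]
        constructor
        · intro h; exact absurd h (by exact fun h => h)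
        · rintro (h | h) <;> exact absurd h (by simp)
  rw [hset, Set.ncard_pair]
  simpa using hadj.ne

lemma three_le_ncard_nbr_inl {V : Type*} [Finite V] (G : SimpleGraph V)
    (A B : Set V) (hdisj : Disjoint A B) (hcover : A ∪ B = Set.univ)
    (hA : 3 ≤ A.ncard) (hB : 3 ≤ B.ncard) (v : V) :
    3 ≤ ((Hgraph G A B).neighborSet (Sum.inl v)).ncard := by
  have hv : v ∈ A ∨ v ∈ B := by
    have h := Set.mem_univ v; rw [← hcover] at h; exact h
  rcases hv with hv | hv
  · calc 3 ≤ B.ncard := hB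
      _ = (Sum.inl '' B : Set (V ⊕ G.edgeSet)).ncard :=
        (Set.ncard_image_of_injective _ Sum.inl_injective).symm
      _ ≤ _ := by
        refine Set.ncard_le_ncard ?_ (Set.toFinite _)
        rintro x ⟨b, hb, rfl⟩
        have hne : v ≠ b := fun h => (hdisj.ne_of_mem hv hb) h
        exact ⟨hne, Or.inl ⟨hv, hb⟩⟩
  · calc 3 ≤ A.ncard := hA
      _ = (Sum.inl '' A : Set (V ⊕ G.edgeSet)).ncard :=
        (Set.ncard_image_of_injective _ Sum.inl_injective).symm
      _ ≤ _ := by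
        refine Set.ncard_le_ncard ?_ (Set.toFinite _)
        rintro x ⟨a, ha, rfl⟩
        have hne : v ≠ a := fun h => (hdisj.ne_of_mem ha hv) h.symm
        exact ⟨hne, Or.inr ⟨hv, ha⟩⟩

lemma iso_ncard_nbr {V W : Type*} {G : SimpleGraph V} {H : SimpleGraph W}
    (φ : G ≃g H) (x : V) :
    (H.neighborSet (φ x)).ncard = (G.neighborSet x).ncard := by
  rw [← Nat.card_coe_set_eq, ← Nat.card_coe_set_eq]
  exact Nat.card_congr (φ.mapNeighborSet x).symm

/-- Any isomorphism between `H₁` and `H₂` maps the subdivision vertices `C₁`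
onto `C₂` and the original vertices `A₁ ∪ B₁` onto `A₂ ∪ B₂`. -/
theorem Hgraph_iso_preserves_parts
    {V₁ V₂ : Type*} [Finite V₁] [Finite V₂]
    (G₁ : SimpleGraph V₁) (G₂ : SimpleGraph V₂)
    (A₁ B₁ : Set V₁) (A₂ B₂ : Set V₂)
    (hconn₁ : G₁.Connected) (hconn₂ : G₂.Connected)
    (hdisj₁ : Disjoint A₁ B₁) (hcover₁ : A₁ ∪ B₁ = Set.univ)
    (hedge₁ : ∀ e : G₁.edgeSet, ∃ a ∈ A₁, ∃ b ∈ B₁, (e : Sym2 V₁) = s(a, b))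
    (hdisj₂ : Disjoint A₂ B₂) (hcover₂ : A₂ ∪ B₂ = Set.univ)
    (hedge₂ : ∀ e : G₂.edgeSet, ∃ a ∈ A₂, ∃ b ∈ B₂, (e : Sym2 V₂) = s(a, b))
    (hA₁ : 3 ≤ A₁.ncard) (hB₁ : 3 ≤ B₁.ncard)
    (hA₂ : 3 ≤ A₂.ncard) (hB₂ : 3 ≤ B₂.ncard)
    (φ : Hgraph G₁ A₁ B₁ ≃g Hgraph G₂ A₂ B₂) :
    (∀ e : G₁.edgeSet, ∃ f : G₂.edgeSet, φ (Sum.inr e) = Sum.inr f) ∧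
    (∀ v : V₁, ∃ w : V₂, φ (Sum.inl v) = Sum.inl w) := by
  constructor
  · intro e
    cases h : φ (Sum.inr e) with
    | inl w =>
        exfalso
        have h1 := iso_ncard_nbr φ (Sum.inr e)
        rw [h, ncard_nbr_inr] at h1
        have h2 := three_le_ncard_nbr_inl G₂ A₂ B₂ hdisj₂ hcover₂ hA₂ hB₂ w
        omega
    | inr f => exact ⟨f, rfl⟩
  · intro v
    cases h : φ (Sum.inl v) with
    | inl w => exact ⟨w, rfl⟩
    | inr f =>
        exfalso
        have h1 := iso_ncard_nbr φ (Sum.inl v)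
        rw [h, ncard_nbr_inr] at h1
        have h2 := three_le_ncard_nbr_inl G₁ A₁ B₁ hdisj₁ hcover₁ hA₁ hB₁ v
        omega
end

section
/- Let H be the graph constructed from a bipartite graph G with bipartition (A, B) by adding a vertex c_e adjacent to a and b for each edge e = ab, plus all edges between A and B. Then H is the comparability graph of the poset P_H, i.e., two distinct vertices u, v of H are adjacent if and only if u and v are comparable in P_H. -/
/-- `H` is the comparability graph of the poset `P_H`: two distinct vertices
are adjacent in `H` iff they are comparable in `P_H`. -/
theorem Hgraph_comparability {V : Type*} [Finite V] (G : SimpleGraph V) (A B : Set V)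
    (hdisj : Disjoint A B) (hcover : A ∪ B = Set.univ)
    (hedge : ∀ e : G.edgeSet, ∃ a ∈ A, ∃ b ∈ B, (e : Sym2 V) = s(a, b)) :
    ∀ u v : V ⊕ G.edgeSet, u ≠ v →
      ((Hgraph G A B).Adj u v ↔ (PHle G A B u v ∨ PHle G A B v u)) := by
  rintro (u | e) (v | f) hne
  · simp only [Hgraph, PHle]
    have h : u ≠ v := fun h => hne (by rw [h])
    tauto
  · simp only [Hgraph, PHle]
    constructor
    · intro hu
      have : u ∈ A ∪ B := hcover ▸ Set.mem_univ u
      rcases this with h | h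
      · exact Or.inl ⟨h, hu⟩
      · exact Or.inr ⟨h, hu⟩
    · rintro (⟨_, h⟩ | ⟨_, h⟩) <;> exact h
  · simp only [Hgraph, PHle]
    constructor
    · intro hu
      have : v ∈ A ∪ B := hcover ▸ Set.mem_univ v
      rcases this with h | h
      · exact Or.inr ⟨h, hu⟩
      · exact Or.inl ⟨h, hu⟩
    · rintro (⟨_, h⟩ | ⟨_, h⟩) <;> exact h
  · simp only [Hgraph, PHle]
    have h : e ≠ f := fun h => hne (by rw [h])
    constructor
    · exact fun h => h.elim
    · rintro (rfl | rfl) <;> exact h rfl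
end

section
/- Let G be a connected bipartite graph with bipartition (A, B), |A|, |B| ≥ 3, and let H be the associated graph (subdivided edges plus complete bipartite between A and B). Then G can be recovered from H up to isomorphism: the graph obtained from H by taking the vertices of degree ≥ 3 as vertex set and joining u, v of different parts whenever they have a common neighbor of degree 2 is isomorphic to G. -/
/-- `G` can be recovered from `H`: two vertices `u, v` of different parts are
adjacent in `G` iff they have a common neighbor of degree 2 in `H`. -/
theorem recover_G_from_H {V : Type*} [Finite V] (G : SimpleGraph V) (A B : Set V)
    (hconn : G.Connected) (hdisj : Disjoint A B) (hcover : A ∪ B = Set.univ)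
    (hedge : ∀ e : G.edgeSet, ∃ a ∈ A, ∃ b ∈ B, (e : Sym2 V) = s(a, b))
    (hA : 3 ≤ A.ncard) (hB : 3 ≤ B.ncard) :
    ∀ u v : V, G.Adj u v ↔
      (((u ∈ A ∧ v ∈ B) ∨ (u ∈ B ∧ v ∈ A)) ∧
        ∃ c : V ⊕ G.edgeSet, ((Hgraph G A B).neighborSet c).ncard = 2 ∧
          (Hgraph G A B).Adj (Sum.inl u) c ∧ (Hgraph G A B).Adj (Sum.inl v) c) := by
  classical
  intro u v
  have hAB : ∀ w, w ∈ A → w ∈ B → False := fun w hwa hwb =>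
    (hdisj.le_bot ⟨hwa, hwb⟩ : w ∈ (∅ : Set V))
  constructor
  · intro h
    obtain ⟨a, ha, b, hb, he⟩ := hedge ⟨s(u, v), h⟩
    have he' : s(u, v) = s(a, b) := he
    rw [Sym2.eq_iff] at he'
    have hparts : (u ∈ A ∧ v ∈ B) ∨ (u ∈ B ∧ v ∈ A) := by
      rcases he' with ⟨rfl, rfl⟩ | ⟨rfl, rfl⟩
      · exact Or.inl ⟨ha, hb⟩
      · exact Or.inr ⟨hb, ha⟩
    refine ⟨hparts, Sum.inr ⟨s(u, v), h⟩, ?_, ?_, ?_⟩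
    · have hset : (Hgraph G A B).neighborSet (Sum.inr ⟨s(u, v), h⟩) =
          {Sum.inl u, Sum.inl v} := by
        ext x
        cases x with
        | inl w =>
          simp only [SimpleGraph.mem_neighborSet, Hgraph, Set.mem_insert_iff,
            Set.mem_singleton_iff, Sum.inl.injEq]
          exact Sym2.mem_iff
        | inr f =>
          simp [SimpleGraph.mem_neighborSet, Hgraph]
      rw [hset, Set.ncard_pair]
      simp only [ne_eq, Sum.inl.injEq]
      exact h.ne
    · exact Sym2.mem_mk_left u v
    · exact Sym2.mem_mk_right u v
  · rintro ⟨hparts, c, hc2, hcu, hcv⟩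
    cases c with
    | inl w =>
      exfalso
      have hw : w ∈ A ∪ B := hcover ▸ Set.mem_univ w
      have key : ∀ S : Set V, 3 ≤ S.ncard →
          (∀ s ∈ S, (Hgraph G A B).Adj (Sum.inl w) (Sum.inl s)) → False := by
        intro S hS hadj
        have hsub : Sum.inl '' S ⊆ (Hgraph G A B).neighborSet (Sum.inl w) := by
          rintro _ ⟨s, hs, rfl⟩
          exact hadj s hs
        have h1 : (Sum.inl '' S : Set (V ⊕ G.edgeSet)).ncard = S.ncard :=
          Set.ncard_image_of_injective S Sum.inl_injective
        have h2 := Set.ncard_le_ncard hsub (Set.toFinite _)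
        omega
      rcases hw with hw | hw
      · refine key B hB fun s hs => ?_
        exact ⟨fun hws => hAB s (hws ▸ hw) hs, Or.inl ⟨hw, hs⟩⟩
      · refine key A hA fun s hs => ?_
        exact ⟨fun hws => hAB s hs (hws ▸ hw), Or.inr ⟨hw, hs⟩⟩
    | inr e =>
      have hu : u ∈ (e : Sym2 V) := hcu
      have hv : v ∈ (e : Sym2 V) := hcv
      have hne : u ≠ v := by
        rintro rfl
        rcases hparts with ⟨h1, h2⟩ | ⟨h2, h1⟩ <;> exact hAB u h1 h2
      have : (e : Sym2 V) = s(u, v) := (Sym2.mem_and_mem_iff hne).mp ⟨hu, hv⟩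
      have he := e.2
      rwa [this] at he
end

section
/- Let φ be an isomorphism between graphs H₁ and H₂ that maps the degree-2 vertex sets C₁ onto C₂ bijectively (where H_i is constructed from connected bipartite G_i with parts of size ≥ 3). Then the map sending each vertex v of G₁ to φ(v) is an isomorphism from G₁ to G₂, where edges correspond via e ↦ f whenever φ(c_e) = c_f. -/
/-- If an isomorphism `φ : H₁ ≃ H₂` maps the subdivision vertices `C₁` into
`C₂`, then `φ` restricted to the original vertices is an isomorphism from
`G₁` to `G₂`. -/
theorem induced_iso_of_Hgraph_iso
    {V₁ V₂ : Type*} [Finite V₁] [Finite V₂]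
    (G₁ : SimpleGraph V₁) (G₂ : SimpleGraph V₂)
    (A₁ B₁ : Set V₁) (A₂ B₂ : Set V₂)
    (hconn₁ : G₁.Connected) (hconn₂ : G₂.Connected)
    (hdisj₁ : Disjoint A₁ B₁) (hcover₁ : A₁ ∪ B₁ = Set.univ)
    (hedge₁ : ∀ e : G₁.edgeSet, ∃ a ∈ A₁, ∃ b ∈ B₁, (e : Sym2 V₁) = s(a, b))
    (hdisj₂ : Disjoint A₂ B₂) (hcover₂ : A₂ ∪ B₂ = Set.univ)
    (hedge₂ : ∀ e : G₂.edgeSet, ∃ a ∈ A₂, ∃ b ∈ B₂, (e : Sym2 V₂) = s(a, b))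
    (hA₁ : 3 ≤ A₁.ncard) (hB₁ : 3 ≤ B₁.ncard)
    (hA₂ : 3 ≤ A₂.ncard) (hB₂ : 3 ≤ B₂.ncard)
    (φ : Hgraph G₁ A₁ B₁ ≃g Hgraph G₂ A₂ B₂)
    (hC : ∀ e : G₁.edgeSet, ∃ f : G₂.edgeSet, φ (Sum.inr e) = Sum.inr f) :
    ∃ ψ : G₁ ≃g G₂, ∀ v : V₁, φ (Sum.inl v) = Sum.inl (ψ v) := by

  classical
  -- Step 1: φ maps original vertices to original vertices.
  have hinl : ∀ v : V₁, ∃ w : V₂, φ (Sum.inl v) = Sum.inl w := by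
    intro v
    rcases h : φ (Sum.inl v) with w | f
    · exact ⟨w, rfl⟩
    · exfalso
      obtain ⟨a, ha, b, hb, hab⟩ := hedge₂ f
      have key : ∀ S : Set V₁, 3 ≤ S.ncard →
          (∀ s ∈ S, (Hgraph G₁ A₁ B₁).Adj (Sum.inl s) (Sum.inl v)) → False := by
        intro S hS hadj
        obtain ⟨T, hTS, hT3⟩ := Set.exists_subset_card_eq hS
        obtain ⟨s₁, s₂, s₃, h12, h13, h23, hTeq⟩ := Set.ncard_eq_three.mp hT3
        have hm : ∀ s ∈ S, ∃ w : V₂, φ (Sum.inl s) = Sum.inl w ∧ w ∈ (f : Sym2 V₂) := by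
          intro s hs
          have hadj2 : (Hgraph G₂ A₂ B₂).Adj (φ (Sum.inl s)) (φ (Sum.inl v)) :=
            φ.map_adj_iff.mpr (hadj s hs)
          rw [h] at hadj2
          rcases hw : φ (Sum.inl s) with w | g
          · refine ⟨w, rfl, ?_⟩
            rw [hw] at hadj2
            exact hadj2
          · rw [hw] at hadj2
            exact hadj2.elim
        have hs₁ : s₁ ∈ S := hTS (by rw [hTeq]; simp)
        have hs₂ : s₂ ∈ S := hTS (by rw [hTeq]; simp)
        have hs₃ : s₃ ∈ S := hTS (by rw [hTeq]; simp)
        obtain ⟨w₁, hw₁, hw₁f⟩ := hm s₁ hs₁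
        obtain ⟨w₂, hw₂, hw₂f⟩ := hm s₂ hs₂
        obtain ⟨w₃, hw₃, hw₃f⟩ := hm s₃ hs₃
        have hinj : Function.Injective φ := φ.toEquiv.injective
        have hww12 : w₁ ≠ w₂ := by
          intro hEq; apply h12
          have := hinj (hw₁.trans (hEq ▸ hw₂.symm))
          exact Sum.inl_injective this
        have hww13 : w₁ ≠ w₃ := by
          intro hEq; apply h13
          have := hinj (hw₁.trans (hEq ▸ hw₃.symm))
          exact Sum.inl_injective this
        have hww23 : w₂ ≠ w₃ := by
          intro hEq; apply h23
          have := hinj (hw₂.trans (hEq ▸ hw₃.symm))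
          exact Sum.inl_injective this
        rw [hab, Sym2.mem_iff] at hw₁f hw₂f hw₃f
        rcases hw₁f with rfl | rfl <;> rcases hw₂f with rfl | rfl <;>
          rcases hw₃f with rfl | rfl <;> simp_all
      have hv : v ∈ A₁ ∪ B₁ := hcover₁ ▸ Set.mem_univ v
      rcases hv with hv | hv
      · exact key B₁ hB₁ (fun s hs =>
          ⟨fun hEq => hdisj₁.ne_of_mem hv hs hEq.symm, Or.inr ⟨hs, hv⟩⟩)
      · exact key A₁ hA₁ (fun s hs =>
          ⟨fun hEq => hdisj₁.ne_of_mem hs hv hEq, Or.inl ⟨hs, hv⟩⟩)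
  -- the forward map on vertices
  choose g hg using hinl
  -- Step 2: φ.symm maps subdivision vertices to subdivision vertices.
  have hinr' : ∀ f : G₂.edgeSet, ∃ e : G₁.edgeSet, φ.symm (Sum.inr f) = Sum.inr e := by
    intro f
    rcases h : φ.symm (Sum.inr f) with v | e
    · exfalso
      have : φ (Sum.inl v) = Sum.inr f := by
        rw [← h]; exact φ.toEquiv.apply_symm_apply _
      rw [hg v] at this
      exact Sum.inl_ne_inr this
    · exact ⟨e, rfl⟩
  -- φ.symm maps original vertices to original vertices.
  have hinl' : ∀ w : V₂, ∃ v : V₁, φ.symm (Sum.inl w) = Sum.inl v := by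
    intro w
    rcases h : φ.symm (Sum.inl w) with v | e
    · exact ⟨v, rfl⟩
    · exfalso
      obtain ⟨f, hf⟩ := hC e
      have : φ (Sum.inr e) = Sum.inl w := by
        rw [← h]; exact φ.toEquiv.apply_symm_apply _
      rw [hf] at this
      exact Sum.inr_ne_inl this
  choose g' hg' using hinl'
  have hgg' : ∀ v, g' (g v) = v := by
    intro v
    have : φ.symm (Sum.inl (g v)) = Sum.inl v := by
      rw [← hg v]; exact φ.toEquiv.symm_apply_apply _
    rw [hg' (g v)] at this
    exact Sum.inl_injective this
  have hg'g : ∀ w, g (g' w) = w := by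
    intro w
    have : φ (Sum.inl (g' w)) = Sum.inl w := by
      rw [← hg' w]; exact φ.toEquiv.apply_symm_apply _
    rw [hg (g' w)] at this
    exact Sum.inl_injective this
  -- Step 3: adjacency is preserved.
  have hfwd : ∀ u v : V₁, G₁.Adj u v → G₂.Adj (g u) (g v) := by
    intro u v h
    set e : G₁.edgeSet := ⟨s(u, v), h⟩ with he
    obtain ⟨f, hf⟩ := hC e
    have hu : (Hgraph G₁ A₁ B₁).Adj (Sum.inl u) (Sum.inr e) := by
      show u ∈ (e : Sym2 V₁); rw [he]; exact Sym2.mem_mk_left u v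
    have hv : (Hgraph G₁ A₁ B₁).Adj (Sum.inl v) (Sum.inr e) := by
      show v ∈ (e : Sym2 V₁); rw [he]; exact Sym2.mem_mk_right u v
    have hu2 := φ.map_adj_iff.mpr hu
    have hv2 := φ.map_adj_iff.mpr hv
    rw [hg u, hf] at hu2
    rw [hg v, hf] at hv2
    have hgu : g u ∈ (f : Sym2 V₂) := hu2
    have hgv : g v ∈ (f : Sym2 V₂) := hv2
    have hne : g u ≠ g v := fun hEq => h.ne (by
      have := hgg' u; rw [hEq, hgg'] at this; exact this.symm)
    have : (f : Sym2 V₂) = s(g u, g v) := (Sym2.mem_and_mem_iff hne).mp ⟨hgu, hgv⟩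
    have := f.2
    rw [‹(f : Sym2 V₂) = s(g u, g v)›] at this
    exact this
  have hbwd : ∀ u v : V₁, G₂.Adj (g u) (g v) → G₁.Adj u v := by
    intro u v h
    set f : G₂.edgeSet := ⟨s(g u, g v), h⟩ with hfdef
    obtain ⟨e, he⟩ := hinr' f
    have hsu : φ.symm (Sum.inl (g u)) = Sum.inl u := by
      rw [← hg u]; exact φ.toEquiv.symm_apply_apply _
    have hsv : φ.symm (Sum.inl (g v)) = Sum.inl v := by
      rw [← hg v]; exact φ.toEquiv.symm_apply_apply _
    have hu : (Hgraph G₂ A₂ B₂).Adj (Sum.inl (g u)) (Sum.inr f) := by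
      show g u ∈ (f : Sym2 V₂); rw [hfdef]; exact Sym2.mem_mk_left _ _
    have hv : (Hgraph G₂ A₂ B₂).Adj (Sum.inl (g v)) (Sum.inr f) := by
      show g v ∈ (f : Sym2 V₂); rw [hfdef]; exact Sym2.mem_mk_right _ _
    have hu2 := φ.symm.map_adj_iff.mpr hu
    have hv2 := φ.symm.map_adj_iff.mpr hv
    rw [show φ.symm (Sum.inl (g u)) = Sum.inl u from hsu, he] at hu2
    rw [show φ.symm (Sum.inl (g v)) = Sum.inl v from hsv, he] at hv2
    have hue : u ∈ (e : Sym2 V₁) := hu2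
    have hve : v ∈ (e : Sym2 V₁) := hv2
    have hne : u ≠ v := fun hEq => h.ne (by rw [hEq])
    have : (e : Sym2 V₁) = s(u, v) := (Sym2.mem_and_mem_iff hne).mp ⟨hue, hve⟩
    have he2 := e.2
    rw [this] at he2
    exact he2
  refine ⟨⟨⟨g, g', hgg', hg'g⟩, ?_⟩, hg⟩
  intro u v
  constructor
  · exact hbwd u v
  · exact hfwd u v
end

section
/- The poset P_H constructed from a connected bipartite graph G with bipartition (A, B), where |A|, |B| ≥ 1 and E(G) ≠ ∅, has interval dimension at most 2: there exist two interval representations I₁, I₂ of V(P_H) = A ∪ B ∪ C such that for all x, y, x ≺ y in P_H iff I₁(x) lies strictly left of I₁(y) and I₂(x) lies strictly left of I₂(y). -/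
/-- The poset `P_H` has interval dimension at most 2: there are two interval
representations whose strict interval orders intersect in exactly the strict
order of `P_H`. -/
theorem PHle_intervalDim_le_two {V : Type*} [Finite V] (G : SimpleGraph V) (A B : Set V)
    (hconn : G.Connected) (hdisj : Disjoint A B) (hcover : A ∪ B = Set.univ)
    (hedge : ∀ e : G.edgeSet, ∃ a ∈ A, ∃ b ∈ B, (e : Sym2 V) = s(a, b))
    (hA : A.Nonempty) (hB : B.Nonempty) (hE : G.edgeSet.Nonempty) :
    ∃ l₁ r₁ l₂ r₂ : (V ⊕ G.edgeSet) → ℝ,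
      (∀ x, l₁ x ≤ r₁ x) ∧ (∀ x, l₂ x ≤ r₂ x) ∧
      ∀ x y : V ⊕ G.edgeSet,
        (PHle G A B x y ∧ x ≠ y) ↔ (r₁ x < l₁ y ∧ r₂ x < l₂ y) := by
  classical
  have := Fintype.ofFinite V
  set n := Fintype.card V with hn
  let eqv := Fintype.equivFin V
  set p : V → ℝ := fun v => ((eqv v : ℕ) : ℝ) with hp
  set N : ℝ := (n : ℝ) with hN
  have hp0 : ∀ v, 0 ≤ p v := fun v => Nat.cast_nonneg _
  have hpN : ∀ v, p v ≤ N - 1 := by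
    intro v
    have h1 : (eqv v : ℕ) < n := (eqv v).isLt
    have h2 : ((eqv v : ℕ) : ℝ) + 1 ≤ (n : ℝ) := by exact_mod_cast h1
    simp only [hp]; linarith
  have hinj : ∀ u v : V, p u = p v → u = v := by
    intro u v h
    simp only [hp] at h
    have : (eqv u : ℕ) = (eqv v : ℕ) := by exact_mod_cast h
    exact eqv.injective (Fin.val_injective this)
  have hhalf : ∀ u v : V, p u < p v + 1/2 ↔ p u ≤ p v := by
    intro u v
    constructor
    · intro h
      by_contra h'
      push_neg at h'
      simp only [hp] at h h'
      have : (eqv v : ℕ) < (eqv u : ℕ) := by exact_mod_cast h'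
      have : ((eqv v : ℕ) : ℝ) + 1 ≤ ((eqv u : ℕ) : ℝ) := by exact_mod_cast this
      linarith
    · intro h; linarith
  choose a ha b hb he using hedge
  have hmem : ∀ (e : G.edgeSet) (u : V), u ∈ (e : Sym2 V) ↔ u = a e ∨ u = b e := by
    intro e u; rw [he e]; exact Sym2.mem_iff
  have hAB : ∀ u : V, u ∉ A → u ∈ B := by
    intro u hu
    have h2 : u ∈ A ∪ B := hcover ▸ Set.mem_univ u
    exact h2.resolve_left hu
  have hnB : ∀ u : V, u ∈ A → u ∉ B := fun u hu => Set.disjoint_left.mp hdisj hu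
  refine ⟨Sum.elim (fun u => if u ∈ A then p u else 2*N+2 - p u) (fun e => p (a e) + 1/2),
          Sum.elim (fun u => if u ∈ A then p u else 2*N+2 - p u) (fun e => 2*N + 3/2 - p (b e)),
          Sum.elim (fun u => if u ∈ A then N - 1 - p u else N + 3 + p u) (fun e => N - 1/2 - p (a e)),
          Sum.elim (fun u => if u ∈ A then N - 1 - p u else N + 3 + p u) (fun e => N + 5/2 + p (b e)),
          ?_, ?_, ?_⟩
  · rintro (u | e)
    · simp
    · simp only [Sum.elim_inr]
      have := hp0 (a e); have := hp0 (b e); have := hpN (a e); have := hpN (b e)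
      linarith
  · rintro (u | e)
    · simp
    · simp only [Sum.elim_inr]
      have := hp0 (a e); have := hp0 (b e)
      linarith
  · rintro (u | e) (v | f) <;>
      simp only [PHle, Sum.elim_inl, Sum.elim_inr, ne_eq, Sum.inl.injEq, Sum.inr.injEq,
        reduceCtorEq, not_false_eq_true, and_true]
    -- inl, inl
    · by_cases hu : u ∈ A <;> by_cases hv : v ∈ A
      · rw [if_pos hu, if_pos hu, if_pos hv, if_pos hv]
        refine iff_of_false ?_ ?_
        · rintro ⟨h | ⟨-, hvB⟩, hne⟩
          · exact hne h
          · exact hnB v hv hvB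
        · rintro ⟨h1, h2⟩; linarith
      · have hvB := hAB v hv
        rw [if_pos hu, if_pos hu, if_neg hv, if_neg hv]
        refine iff_of_true ⟨Or.inr ⟨hu, hvB⟩, fun h => hv (h ▸ hu)⟩ ?_
        have := hp0 u; have := hp0 v; have := hpN u; have := hpN v
        constructor <;> linarith
      · have huB := hAB u hu
        rw [if_neg hu, if_neg hu, if_pos hv, if_pos hv]
        refine iff_of_false ?_ ?_
        · rintro ⟨h | ⟨huA, -⟩, hne⟩
          · exact hu (h ▸ hv)
          · exact hu huA
        · rintro ⟨h1, -⟩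
          have := hp0 u; have := hpN v; have := hpN u
          linarith
      · rw [if_neg hu, if_neg hu, if_neg hv, if_neg hv]
        refine iff_of_false ?_ ?_
        · rintro ⟨h | ⟨huA, -⟩, hne⟩
          · exact hne h
          · exact hu huA
        · rintro ⟨h1, h2⟩; linarith
    -- inl, inr
    · by_cases hu : u ∈ A
      · rw [if_pos hu, if_pos hu]
        constructor
        · rintro ⟨-, hue⟩
          have : u = a f := by
            rcases (hmem f u).mp hue with h | h
            · exact h
            · exact absurd (h ▸ hb f) (hnB u hu)
          subst this
          constructor <;> linarith
        · rintro ⟨h1, h2⟩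
          have e1 : p u ≤ p (a f) := (hhalf u (a f)).mp h1
          have e2 : p (a f) ≤ p u := (hhalf (a f) u).mp (by linarith)
          have : u = a f := hinj _ _ (le_antisymm e1 e2)
          exact ⟨hu, (hmem f u).mpr (Or.inl this)⟩
      · rw [if_neg hu, if_neg hu]
        refine iff_of_false (fun h => hu h.1) ?_
        rintro ⟨h1, -⟩
        have := hp0 u; have := hpN (a f); have := hpN u
        linarith
    -- inr, inl
    · by_cases hv : v ∈ A
      · rw [if_pos hv, if_pos hv]
        refine iff_of_false ?_ ?_
        · rintro ⟨hvB, -⟩; exact hnB v hv hvB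
        · rintro ⟨h1, -⟩
          have := hp0 (b e); have := hpN v; have := hpN (b e)
          linarith
      · have hvB := hAB v hv
        rw [if_neg hv, if_neg hv]
        constructor
        · rintro ⟨-, hve⟩
          have : v = b e := by
            rcases (hmem e v).mp hve with h | h
            · exact absurd (h ▸ ha e) (fun h' => hnB v h' hvB)
            · exact h
          subst this
          constructor <;> linarith
        · rintro ⟨h1, h2⟩
          have e1 : p v ≤ p (b e) := (hhalf v (b e)).mp (by linarith)
          have e2 : p (b e) ≤ p v := (hhalf (b e) v).mp (by linarith)
          have : v = b e := hinj _ _ (le_antisymm e1 e2)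
          exact ⟨hvB, (hmem e v).mpr (Or.inr this)⟩
    -- inr, inr
    · refine iff_of_false ?_ ?_
      · rintro ⟨h, hne⟩; exact hne h
      · rintro ⟨h1, -⟩
        have := hp0 (b e); have := hpN (a f); have := hpN (b e)
        linarith
end
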